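/- Let H be a d×d complex Hadamard matrix and suppose the real linear system R_{1,j} = 0 (1 ≤ j ≤ d), R_{i,1} = 0 (2 ≤ i ≤ d), and Σ_{m=1}^d H_{j,m}·conj(H_{k,m})·(R_{j,m} - R_{k,m}) = 0 (1 ≤ j < k ≤ d) in the real matrix variable R has only the trivial solution R = 0. Then for any differentiable curve R(t) of real d×d matrices with R(0) = 0, first row and column identically zero, such that H ∘ EXP(iR(t)) is Hadamard for all t near 0, one has R'(0) = 0. -/

import Mathlib

open Matrix

theorem stmt_19 (d : ℕ) (H : Matrix (Fin d) (Fin d) ℂ)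
    (hd : 0 < d)
    (hunimod : ∀ j k : Fin d, ‖H j k‖ = 1)
    (hHad : H * Hᴴ = (d : ℂ) • 1)
    (hdefect : ∀ R : Matrix (Fin d) (Fin d) ℝ,
      (∀ j : Fin d, R ⟨0, hd⟩ j = 0) → (∀ i : Fin d, R i ⟨0, hd⟩ = 0) →
      (∀ j k : Fin d, j < k →
        ∑ m : Fin d, H j m * (starRingEnd ℂ) (H k m) * ((R j m : ℝ) - (R k m : ℝ)) = 0) →
      R = 0)
    (R : ℝ → Matrix (Fin d) (Fin d) ℝ)
    (hdiff : ∀ j k : Fin d, Differentiable ℝ fun t => R t j k)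
    (hR0 : R 0 = 0)
    (hrow : ∀ t : ℝ, ∀ j : Fin d, R t ⟨0, hd⟩ j = 0)
    (hcol : ∀ t : ℝ, ∀ i : Fin d, R t i ⟨0, hd⟩ = 0)
    (hHadcurve : ∀ᶠ t in nhds (0 : ℝ),
      (Matrix.of fun j k => H j k * Complex.exp (Complex.I * (R t j k : ℝ))) *
          (Matrix.of fun j k => H j k * Complex.exp (Complex.I * (R t j k : ℝ)))ᴴ =
        (d : ℂ) • 1) :
    (Matrix.of fun j k => deriv (fun t => R t j k) 0) = (0 : Matrix (Fin d) (Fin d) ℝ) := by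
  apply hdefect
  · intro j
    have h : (fun t => R t ⟨0, hd⟩ j) = fun _ : ℝ => (0 : ℝ) := funext fun t => hrow t j
    simp only [Matrix.of_apply, h, deriv_const]
  · intro i
    have h : (fun t => R t i ⟨0, hd⟩) = fun _ : ℝ => (0 : ℝ) := funext fun t => hcol t i
    simp only [Matrix.of_apply, h, deriv_const]
  · intro j k hjk
    have hne : j ≠ k := ne_of_lt hjk
    set a : Fin d → ℝ := fun m => deriv (fun t => R t j m) 0 with ha
    set b : Fin d → ℝ := fun m => deriv (fun t => R t k m) 0 with hb
    set F : ℝ → ℂ := fun t => ∑ m, H j m * (starRingEnd ℂ) (H k m) *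
      Complex.exp (Complex.I * (((R t j m : ℝ) : ℂ) - ((R t k m : ℝ) : ℂ))) with hF
    -- F is eventually 0
    have hFzero : F =ᶠ[nhds (0 : ℝ)] fun _ => (0 : ℂ) := by
      filter_upwards [hHadcurve] with t ht
      have := congrFun (congrFun ht j) k
      rw [Matrix.mul_apply] at this
      simp only [Matrix.conjTranspose_apply, Matrix.of_apply, Matrix.smul_apply,
        Matrix.one_apply_ne hne, smul_zero] at this
      rw [hF]
      rw [← this]
      apply Finset.sum_congr rfl
      intro m _
      have hst : star (Complex.exp (Complex.I * ((R t k m : ℝ) : ℂ))) =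
          Complex.exp (-(Complex.I * ((R t k m : ℝ) : ℂ))) := by
        rw [Complex.star_def, ← Complex.exp_conj]
        congr 1
        simp [Complex.conj_ofReal]
      rw [star_mul', hst, mul_sub, sub_eq_add_neg, Complex.exp_add, RCLike.star_def]
      ring
    -- derivative of F at 0
    have hderiv : ∀ m : Fin d, HasDerivAt
        (fun t => H j m * (starRingEnd ℂ) (H k m) *
          Complex.exp (Complex.I * (((R t j m : ℝ) : ℂ) - ((R t k m : ℝ) : ℂ))))
        (H j m * (starRingEnd ℂ) (H k m) * (Complex.I * (((a m : ℝ) : ℂ) - ((b m : ℝ) : ℂ)))) 0 := by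
      intro m
      have h1 : HasDerivAt (fun t => ((R t j m : ℝ) : ℂ)) ((a m : ℝ) : ℂ) 0 :=
        ((hdiff j m 0).hasDerivAt).ofReal_comp
      have h2 : HasDerivAt (fun t => ((R t k m : ℝ) : ℂ)) ((b m : ℝ) : ℂ) 0 :=
        ((hdiff k m 0).hasDerivAt).ofReal_comp
      have h3 := ((h1.fun_sub h2).const_mul Complex.I).cexp
      have h0j : R 0 j m = 0 := by rw [hR0]; rfl
      have h0k : R 0 k m = 0 := by rw [hR0]; rfl
      simp only [h0j, h0k, Complex.ofReal_zero, sub_zero, mul_zero, Complex.exp_zero,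
        one_mul] at h3
      exact h3.const_mul _
    have hFD : HasDerivAt F (∑ m, H j m * (starRingEnd ℂ) (H k m) *
        (Complex.I * (((a m : ℝ) : ℂ) - ((b m : ℝ) : ℂ)))) 0 :=
      HasDerivAt.fun_sum fun m _ => hderiv m
    have hd0 : deriv F 0 = 0 := by
      rw [Filter.EventuallyEq.deriv_eq hFzero]
      exact deriv_const _ _
    have hS : (∑ m, H j m * (starRingEnd ℂ) (H k m) *
        (Complex.I * (((a m : ℝ) : ℂ) - ((b m : ℝ) : ℂ)))) = 0 := by
      rw [← hFD.deriv, hd0]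
    have hS' : Complex.I * ∑ m, H j m * (starRingEnd ℂ) (H k m) *
        (((a m : ℝ) : ℂ) - ((b m : ℝ) : ℂ)) = 0 := by
      rw [Finset.mul_sum]
      rw [← hS]
      apply Finset.sum_congr rfl
      intro m _
      ring
    have hsum := (mul_eq_zero.mp hS').resolve_left Complex.I_ne_zero
    rw [← hsum]
    apply Finset.sum_congr rfl
    intro m _
    simp only [Matrix.of_apply, ha, hb]
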